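/- Let A be a commutative ring without S-torsion and S a truncation set. Then the map Ψ_S : A^S → A^S, Ψ_S(a)_m = ∑_{n ∈ S, n ∣ m} n·a_n^{m/n}, is injective, its image is exactly X_S(A), and the resulting bijection Ψ_S : A^S → X_S(A) is a homeomorphism for the product topologies (A discrete). -/

import Mathlib

/-- `S/n = {ν : νn ∈ S}`. -/
def truncDiv (S : Set ℕ) (n : ℕ) : Set ℕ := {ν | ν * n ∈ S}

/-- A truncation set: a nonempty set of positive integers closed under
taking positive divisors. -/
def IsTruncationSet (S : Set ℕ) : Prop :=
  S.Nonempty ∧ (∀ n ∈ S, 0 < n) ∧ ∀ n ∈ S, ∀ d : ℕ, d ∣ n → 0 < d → d ∈ S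

/-- Verschiebung `V_n : A^{S/n} → A^S`. -/
def Versch {A : Type*} [CommRing A] (S : Set ℕ) (n : ℕ)
    (a : truncDiv S n → A) : S → A :=
  fun μ =>
    if h : n ∣ μ.1 then
      (n : A) * a ⟨μ.1 / n, show μ.1 / n * n ∈ S by
        rw [Nat.div_mul_cancel h]; exact μ.2⟩
    else 0

/-- The product topology on `A^S`, `A` discrete. -/
def prodTop (S : Set ℕ) (A : Type*) : TopologicalSpace (S → A) :=
  @Pi.topologicalSpace S (fun _ => A) fun _ => ⊥

/-- `X_S(J)`: the topological closure of the additive subgroup of `A^S`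
generated by the elements `V_n⟨a⟩`, `n ∈ S`, `a ∈ J`. -/
def XS (S : Set ℕ) {A : Type*} [CommRing A] (J : Set A) : Set (S → A) :=
  @closure _ (prodTop S A)
    (AddSubgroup.closure
      {x | ∃ n ∈ S, ∃ a ∈ J, x = Versch S n fun ν => a ^ ν.1} : Set (S → A))

open Classical in
/-- `Ψ_S : A^S → A^S`, `Ψ_S(a)_m = ∑_{n ∈ S, n ∣ m} n·a_n^{m/n}`. -/
noncomputable def PsiS (S : Set ℕ) {A : Type*} [CommRing A] (a : S → A) :
    S → A :=
  fun m => ∑ n ∈ ((m : ℕ).divisors.filter (· ∈ S)).attach,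
    (n.1 : A) * (a ⟨n.1, (Finset.mem_filter.mp n.2).2⟩) ^ ((m : ℕ) / n.1)

open Finset MvPolynomial



open Classical in
noncomputable def dS (S : Set ℕ) (m : ℕ) : Finset ℕ := m.divisors.filter (· ∈ S)

open Classical in
noncomputable def pdS (S : Set ℕ) (m : ℕ) : Finset ℕ := m.properDivisors.filter (· ∈ S)

noncomputable def psi (S : Set ℕ) {A : Type*} [CommRing A] (x : ℕ → A) (m : ℕ) : A :=
  ∑ n ∈ dS S m, (n : A) * x n ^ (m / n)

lemma mem_dS {S : Set ℕ} {m n : ℕ} : n ∈ dS S m ↔ n ∣ m ∧ m ≠ 0 ∧ n ∈ S := by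
  simp [dS, Nat.mem_divisors, and_assoc]

lemma mem_pdS {S : Set ℕ} {m n : ℕ} : n ∈ pdS S m ↔ (n ∣ m ∧ n < m) ∧ n ∈ S := by
  simp [pdS, Nat.mem_properDivisors]

lemma dS_eq_insert {S : Set ℕ} {m : ℕ} (hm0 : m ≠ 0) (hmS : m ∈ S) :
    dS S m = insert m (pdS S m) := by
  classical
  rw [dS, pdS, ← Nat.insert_self_properDivisors hm0, Finset.filter_insert, if_pos hmS]

lemma psi_split {S : Set ℕ} {A : Type*} [CommRing A] (x : ℕ → A) {m : ℕ}
    (hmS : m ∈ S) (hm0 : 0 < m) :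
    psi S x m = (m : A) * x m + ∑ n ∈ pdS S m, (n : A) * x n ^ (m / n) := by
  rw [psi, dS_eq_insert hm0.ne' hmS, Finset.sum_insert (by
    intro h
    exact absurd (mem_pdS.mp h).1.2 (lt_irrefl m)), Nat.div_self hm0, pow_one]

lemma psi_congr {S : Set ℕ} {A : Type*} [CommRing A] {x y : ℕ → A}
    (h : ∀ n ∈ S, x n = y n) (m : ℕ) : psi S x m = psi S y m := by
  apply Finset.sum_congr rfl
  intro n hn
  rw [h n (mem_dS.mp hn).2.2]

lemma map_psi {S : Set ℕ} {A B : Type*} [CommRing A] [CommRing B] (φ : A →+* B)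
    (x : ℕ → A) (m : ℕ) : φ (psi S x m) = psi S (fun n => φ (x n)) m := by
  rw [psi, psi, map_sum]
  apply Finset.sum_congr rfl
  intro n _
  rw [map_mul, map_pow, map_natCast]

lemma psi_uniq {A : Type*} [CommRing A] {S : Set ℕ} (hS : IsTruncationSet S)
    (htf : ∀ n ∈ S, Function.Injective fun x : A => (n : A) * x)
    {x y : ℕ → A} {m : ℕ} (h : ∀ d ∈ S, d ∣ m → psi S x d = psi S y d) :
    ∀ d, d ∈ S → d ∣ m → x d = y d := by
  intro d
  induction d using Nat.strong_induction_on with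
  | _ d ih =>
    intro hdS hdm
    have hd0 : 0 < d := hS.2.1 d hdS
    have key := h d hdS hdm
    rw [psi_split x hdS hd0, psi_split y hdS hd0] at key
    have htail : ∑ n ∈ pdS S d, (n : A) * x n ^ (d / n)
        = ∑ n ∈ pdS S d, (n : A) * y n ^ (d / n) := by
      apply Finset.sum_congr rfl
      intro n hn
      obtain ⟨⟨hnd, hlt⟩, hnS⟩ := mem_pdS.mp hn
      rw [ih n hlt hnS (hnd.trans hdm)]
    rw [htail] at key
    exact htf d hdS (add_right_cancel key)

lemma psi_glue {A : Type*} [CommRing A] {S : Set ℕ} (hS : IsTruncationSet S)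
    (htf : ∀ n ∈ S, Function.Injective fun x : A => (n : A) * x)
    (w : ℕ → A) (π : ℕ → Prop) [DecidablePred π] (hπS : ∀ n, π n → n ∈ S)
    (hdown : ∀ ⦃n d⦄, π n → d ∣ n → d ∈ S → π d)
    (Z : ∀ n, π n → ℕ → A)
    (hZ : ∀ n (h : π n), ∀ d ∈ S, d ∣ n → psi S (Z n h) d = w d) :
    ∀ d, π d → psi S (fun n => if h : π n then Z n h n else 0) d = w d := by
  intro d hd
  have h1 : psi S (fun n => if h : π n then Z n h n else 0) d = psi S (Z d hd) d := by
    apply Finset.sum_congr rfl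
    intro n hn
    obtain ⟨hnd, _, hnS⟩ := mem_dS.mp hn
    have hπn : π n := hdown hd hnd hnS
    simp only [dif_pos hπn]
    have heq : (Z n hπn) n = (Z d hd) n := by
      refine psi_uniq hS htf (x := Z n hπn) (y := Z d hd) (m := n) ?_ n hnS dvd_rfl
      intro e heS hedvd
      rw [hZ n hπn e heS hedvd, hZ d hd e heS (hedvd.trans hnd)]
    rw [heq]
  rw [h1, hZ d hd d (hπS d hd) dvd_rfl]

lemma frob_dvd {σ : Type*} {p : ℕ} (hp : p.Prime) (f : MvPolynomial σ ℤ) :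
    (p : MvPolynomial σ ℤ) ∣ expand p f - f ^ p := by
  haveI : Fact p.Prime := ⟨hp⟩
  have h : (C ((p : ℕ) : ℤ) : MvPolynomial σ ℤ) ∣ expand p f - f ^ p := by
    rw [MvPolynomial.C_dvd_iff_zmod, map_sub, map_pow, MvPolynomial.map_expand,
      MvPolynomial.expand_zmod, sub_self]
  rwa [MvPolynomial.C_eq_coe_nat] at h

lemma dvd_pow_sub_pow_of_dvd_sub {R : Type*} [CommRing R] {p : ℕ} {a b : R}
    (h : (p : R) ∣ a - b) (k : ℕ) :
    (p : R) ^ (k.factorization p + 1) ∣ a ^ k - b ^ k := by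
  have hk : p ^ k.factorization p * (k / p ^ k.factorization p) = k :=
    Nat.ordProj_mul_ordCompl_eq_self k p
  have h1 : (p : R) ^ (k.factorization p + 1) ∣ a ^ p ^ k.factorization p - b ^ p ^ k.factorization p := by
    have := dvd_sub_pow_of_dvd_sub h (k.factorization p)
    push_cast at this ⊢
    exact this
  calc (p : R) ^ (k.factorization p + 1)
      ∣ (a ^ p ^ k.factorization p) ^ (k / p ^ k.factorization p)
        - (b ^ p ^ k.factorization p) ^ (k / p ^ k.factorization p) :=
        h1.trans (sub_dvd_pow_sub_pow _ _ _)
    _ = a ^ k - b ^ k := by rw [← pow_mul, ← pow_mul, hk]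

lemma pow_factorization_dvd_of_not_dvd_div {m n p : ℕ} (hp : p.Prime) (hpm : p ∣ m)
    (hm0 : m ≠ 0) (hnm : n ∣ m) (h : ¬ n ∣ m / p) : p ^ m.factorization p ∣ n := by
  have hn0 : n ≠ 0 := by rintro rfl; exact hm0 (zero_dvd_iff.mp hnm)
  by_contra hc
  apply h
  rw [Nat.dvd_div_iff_mul_dvd hpm]
  have hlt : n.factorization p < m.factorization p := by
    rw [Nat.Prime.pow_dvd_iff_le_factorization hp hn0] at hc
    omega
  have hle : n.factorization ≤ m.factorization :=
    (Nat.factorization_le_iff_dvd hn0 hm0).mpr hnm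
  rw [← Nat.factorization_le_iff_dvd (Nat.mul_ne_zero hp.pos.ne' hn0) hm0]
  rw [Nat.factorization_mul hp.pos.ne' hn0]
  intro q
  rw [Finsupp.add_apply, hp.factorization, Finsupp.single_apply]
  rcases eq_or_ne p q with rfl | hq
  · simp
    omega
  · simp only [if_neg hq, zero_add]
    exact hle q

lemma mul_div_div {m n p : ℕ} (hp0 : 0 < p) (hn0 : 0 < n) (hpm : p ∣ m) (hn : n ∣ m / p) :
    p * (m / p / n) = m / n := by
  have h1 : p * n ∣ m := (Nat.dvd_div_iff_mul_dvd hpm).mp hn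
  obtain ⟨t, rfl⟩ := h1
  rw [Nat.div_div_eq_div_mul, Nat.mul_div_cancel_left t (Nat.mul_pos hp0 hn0)]
  rw [show p * n * t = n * (p * t) by ring, Nat.mul_div_cancel_left _ hn0]

lemma gc_psi {σ : Type*} {S : Set ℕ} (hS : IsTruncationSet S) (g : ℕ → MvPolynomial σ ℤ)
    (hg : ∀ (p : ℕ) (n : ℕ), expand p (g n) = g n ^ p) {m : ℕ} (hm : m ∈ S) {p : ℕ}
    (hp : p.Prime) (hpm : p ∣ m) :
    (p : MvPolynomial σ ℤ) ^ m.factorization p ∣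
      psi S g m - expand p (psi S g (m / p)) := by
  have hm0 : m ≠ 0 := (hS.2.1 m hm).ne'
  have hsub : dS S (m / p) ⊆ dS S m := by
    intro n hn
    obtain ⟨h1, h2, h3⟩ := mem_dS.mp hn
    exact mem_dS.mpr ⟨h1.trans (Nat.div_dvd_of_dvd hpm), hm0, h3⟩
  have hexp : expand p (psi S g (m / p))
      = ∑ n ∈ dS S (m / p), (n : MvPolynomial σ ℤ) * g n ^ (m / n) := by
    rw [psi, map_sum]
    apply Finset.sum_congr rfl
    intro n hn
    obtain ⟨h1, h2, h3⟩ := mem_dS.mp hn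
    have hn0 : 0 < n := hS.2.1 n h3
    rw [map_mul, map_pow, map_natCast, hg, ← pow_mul, mul_div_div hp.pos hn0 hpm h1]
  rw [psi, hexp, ← Finset.sum_sdiff_eq_sub hsub]
  apply Finset.dvd_sum
  intro n hn
  rw [Finset.mem_sdiff] at hn
  obtain ⟨hnm, hmm0, hnS⟩ := mem_dS.mp hn.1
  have hmp0 : m / p ≠ 0 :=
    (Nat.div_pos (Nat.le_of_dvd (Nat.pos_of_ne_zero hm0) hpm) hp.pos).ne'
  have hnd : ¬ n ∣ m / p := fun hc => hn.2 (mem_dS.mpr ⟨hc, hmp0, hnS⟩)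
  have hdvd : p ^ m.factorization p ∣ n :=
    pow_factorization_dvd_of_not_dvd_div hp hpm hm0 hnm hnd
  have hcast : (p : MvPolynomial σ ℤ) ^ m.factorization p ∣ (n : MvPolynomial σ ℤ) := by
    have := Nat.cast_dvd_cast (α := MvPolynomial σ ℤ) hdvd
    push_cast at this
    exact this
  exact Dvd.dvd.mul_right hcast _

lemma core_exists {σ : Type*} {S : Set ℕ} (hS : IsTruncationSet S)
    (w : ℕ → MvPolynomial σ ℤ)
    (hw : ∀ m ∈ S, ∀ p : ℕ, p.Prime → p ∣ m →
      (p : MvPolynomial σ ℤ) ^ m.factorization p ∣ w m - expand p (w (m / p))) :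
    ∃ z : ℕ → MvPolynomial σ ℤ, ∀ m ∈ S, psi S z m = w m := by
  classical
  have htfB : ∀ n ∈ S, Function.Injective
      fun x : MvPolynomial σ ℤ => (n : MvPolynomial σ ℤ) * x := by
    intro n hn x y hxy
    have hne : (n : MvPolynomial σ ℤ) ≠ 0 := Nat.cast_ne_zero.mpr (hS.2.1 n hn).ne'
    exact mul_left_cancel₀ hne hxy
  have H : ∀ m, m ∈ S → ∃ z : ℕ → MvPolynomial σ ℤ, ∀ d ∈ S, d ∣ m → psi S z d = w d := by
    intro m
    induction m using Nat.strong_induction_on with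
    | _ m ih =>
      intro hm
      have hm0 : 0 < m := hS.2.1 m hm
      set π : ℕ → Prop := fun n => n ∈ S ∧ n ∣ m ∧ n ≠ m with hπdef
      have hlt : ∀ n, π n → n < m := fun n hn =>
        lt_of_le_of_ne (Nat.le_of_dvd hm0 hn.2.1) hn.2.2
      choose Z hZ using fun (n : ℕ) (h : π n) => ih n (hlt n h) h.1
      set z' : ℕ → MvPolynomial σ ℤ := fun n => if h : π n then Z n h n else 0 with hz'def
      have hdown : ∀ ⦃n d : ℕ⦄, π n → d ∣ n → d ∈ S → π d := by
        intro n d hn hdn hdS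
        refine ⟨hdS, hdn.trans hn.2.1, ?_⟩
        exact ((Nat.le_of_dvd (hS.2.1 n hn.1) hdn).trans_lt (hlt n hn)).ne
      have hC1 : ∀ d, π d → psi S z' d = w d :=
        psi_glue hS htfB w π (fun n h => h.1) hdown Z hZ
      have hdiv : (m : MvPolynomial σ ℤ) ∣
          w m - ∑ n ∈ pdS S m, (n : MvPolynomial σ ℤ) * z' n ^ (m / n) := by
        have hppow : ∀ p ∈ m.primeFactors, (p : MvPolynomial σ ℤ) ^ m.factorization p ∣
            w m - ∑ n ∈ pdS S m, (n : MvPolynomial σ ℤ) * z' n ^ (m / n) := by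
          intro p hp
          obtain ⟨hpp, hpm, -⟩ := Nat.mem_primeFactors.mp hp
          have hm'S : m / p ∈ S := hS.2.2 m hm (m / p) (Nat.div_dvd_of_dvd hpm)
            (Nat.div_pos (Nat.le_of_dvd hm0 hpm) hpp.pos)
          have hm'0 : 0 < m / p := hS.2.1 _ hm'S
          have hm'lt : m / p < m := Nat.div_lt_self hm0 hpp.one_lt
          have hπm' : π (m / p) := ⟨hm'S, Nat.div_dvd_of_dvd hpm, hm'lt.ne⟩
          have key1 : (p : MvPolynomial σ ℤ) ^ m.factorization p ∣
              w m - expand p (w (m / p)) := hw m hm p hpp hpm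
          have hsub : dS S (m / p) ⊆ pdS S m := by
            intro n hn
            obtain ⟨h1, h2, h3⟩ := mem_dS.mp hn
            exact mem_pdS.mpr ⟨⟨h1.trans (Nat.div_dvd_of_dvd hpm),
              (Nat.le_of_dvd hm'0 h1).trans_lt hm'lt⟩, h3⟩
          have hexp : expand p (w (m / p))
              = ∑ n ∈ dS S (m / p),
                  (n : MvPolynomial σ ℤ) * (expand p (z' n)) ^ (m / p / n) := by
            rw [← hC1 _ hπm', psi, map_sum]
            apply Finset.sum_congr rfl
            intro n hn
            rw [map_mul, map_pow, map_natCast]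
          have key2 : (p : MvPolynomial σ ℤ) ^ m.factorization p ∣
              expand p (w (m / p))
                - ∑ n ∈ pdS S m, (n : MvPolynomial σ ℤ) * z' n ^ (m / n) := by
            rw [hexp, ← Finset.sum_sdiff hsub]
            have hre : ∑ n ∈ dS S (m / p),
                  (n : MvPolynomial σ ℤ) * (expand p (z' n)) ^ (m / p / n)
                - (∑ n ∈ pdS S m \ dS S (m / p), (n : MvPolynomial σ ℤ) * z' n ^ (m / n)
                  + ∑ n ∈ dS S (m / p), (n : MvPolynomial σ ℤ) * z' n ^ (m / n))
                = (∑ n ∈ dS S (m / p),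
                    ((n : MvPolynomial σ ℤ) * (expand p (z' n)) ^ (m / p / n)
                      - (n : MvPolynomial σ ℤ) * z' n ^ (m / n)))
                  - ∑ n ∈ pdS S m \ dS S (m / p),
                      (n : MvPolynomial σ ℤ) * z' n ^ (m / n) := by
              rw [Finset.sum_sub_distrib]; ring
            rw [hre]
            apply dvd_sub
            · apply Finset.dvd_sum
              intro n hn
              obtain ⟨hnd, -, hnS⟩ := mem_dS.mp hn
              have hn0 : 0 < n := hS.2.1 n hnS
              have hmn : m / n = p * (m / p / n) := (mul_div_div hpp.pos hn0 hpm hnd).symm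
              have h1 : (p : MvPolynomial σ ℤ) ∣ expand p (z' n) - (z' n) ^ p :=
                frob_dvd hpp _
              have h2 := dvd_pow_sub_pow_of_dvd_sub h1 (m / p / n)
              have hmn_dvd : n ∣ m := hnd.trans (Nat.div_dvd_of_dvd hpm)
              have hvsum : m.factorization p
                  = n.factorization p + ((m / p / n).factorization p + 1) := by
                have hk0 : m / p / n ≠ 0 :=
                  (Nat.div_pos (Nat.le_of_dvd hm'0 hnd) hn0).ne'
                have e2 : (p * (m / p / n)).factorization p
                    = 1 + (m / p / n).factorization p := by
                  rw [Nat.factorization_mul hpp.pos.ne' hk0, Finsupp.add_apply,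
                    hpp.factorization, Finsupp.single_apply, if_pos rfl]
                have e3 : n.factorization p ≤ m.factorization p :=
                  (Nat.factorization_le_iff_dvd hn0.ne' hm0.ne').mpr hmn_dvd p
                have e4 : (m / n).factorization p
                    = m.factorization p - n.factorization p := by
                  rw [Nat.factorization_div hmn_dvd, Finsupp.tsub_apply]
                rw [hmn] at e4
                omega
              have hterm : (n : MvPolynomial σ ℤ) * (expand p (z' n)) ^ (m / p / n)
                  - (n : MvPolynomial σ ℤ) * z' n ^ (m / n)
                  = (n : MvPolynomial σ ℤ)
                    * ((expand p (z' n)) ^ (m / p / n) - ((z' n) ^ p) ^ (m / p / n)) := by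
                rw [hmn, ← pow_mul]; ring
              rw [hterm, hvsum, pow_add]
              apply mul_dvd_mul _ h2
              have hdvd := Nat.ordProj_dvd n p
              have := Nat.cast_dvd_cast (α := MvPolynomial σ ℤ) hdvd
              push_cast at this
              exact this
            · apply Finset.dvd_sum
              intro n hn
              rw [Finset.mem_sdiff] at hn
              obtain ⟨⟨hnm, hnlt⟩, hnS⟩ := mem_pdS.mp hn.1
              have hnd : ¬ n ∣ m / p := fun hc => hn.2 (mem_dS.mpr ⟨hc, hm'0.ne', hnS⟩)
              have hdvd : p ^ m.factorization p ∣ n :=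
                pow_factorization_dvd_of_not_dvd_div hpp hpm hm0.ne' hnm hnd
              have hcast := Nat.cast_dvd_cast (α := MvPolynomial σ ℤ) hdvd
              push_cast at hcast
              exact hcast.mul_right _
          have := dvd_add key1 key2
          rwa [sub_add_sub_cancel] at this
        have hmprod : (m : MvPolynomial σ ℤ)
            = ∏ p ∈ m.primeFactors, (p : MvPolynomial σ ℤ) ^ m.factorization p := by
          conv_lhs => rw [← Nat.factorization_prod_pow_eq_self hm0.ne']
          rw [Finsupp.prod]
          push_cast
          rfl
        rw [hmprod]
        apply Finset.prod_dvd_of_coprime _ hppow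
        intro p hp q hq hpq
        have hpp := Nat.prime_of_mem_primeFactors hp
        have hqq := Nat.prime_of_mem_primeFactors hq
        have h1 : IsCoprime (p : ℤ) (q : ℤ) :=
          Nat.isCoprime_iff_coprime.mpr ((Nat.coprime_primes hpp hqq).mpr hpq)
        have h2 := (h1.pow (m := m.factorization p) (n := m.factorization q)).map
          (Int.castRingHom (MvPolynomial σ ℤ))
        simpa using h2
      obtain ⟨c, hc⟩ := hdiv
      refine ⟨Function.update z' m c, ?_⟩
      intro d hdS hdm
      rcases eq_or_ne d m with rfl | hd
      · rw [psi_split _ hdS hm0, Function.update_self]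
        have htail : ∑ n ∈ pdS S d, (n : MvPolynomial σ ℤ)
              * (Function.update z' d c n) ^ (d / n)
            = ∑ n ∈ pdS S d, (n : MvPolynomial σ ℤ) * z' n ^ (d / n) := by
          apply Finset.sum_congr rfl
          intro n hn
          rw [Function.update_of_ne (mem_pdS.mp hn).1.2.ne]
        rw [htail]
        linear_combination -hc
      · have hπd : π d := ⟨hdS, hdm, hd⟩
        have hps : psi S (Function.update z' m c) d = psi S z' d := by
          apply Finset.sum_congr rfl
          intro n hn
          obtain ⟨hnd, -, -⟩ := mem_dS.mp hn
          have hne : n ≠ m := ((Nat.le_of_dvd (hS.2.1 d hdS) hnd).trans_lt (hlt d hπd)).ne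
          rw [Function.update_of_ne hne]
        rw [hps, hC1 d hπd]
  choose Z hZ using H
  exact ⟨fun n => if h : n ∈ S then Z n h n else 0,
    fun m hm => psi_glue hS htfB w (· ∈ S) (fun n h => h) (fun n d _ _ hdS => hdS) Z hZ m hm⟩

lemma psi_add {A : Type*} [CommRing A] {S : Set ℕ} (hS : IsTruncationSet S) (x y : ℕ → A) :
    ∃ z : ℕ → A, ∀ m ∈ S, psi S z m = psi S x m + psi S y m := by
  classical
  set B := MvPolynomial (ℕ × Bool) ℤ with hB
  set gX : ℕ → B := fun n => X (n, false) with hgX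
  set gY : ℕ → B := fun n => X (n, true) with hgY
  have hgXf : ∀ (p : ℕ) (n : ℕ), expand p (gX n) = gX n ^ p := fun p n => expand_X p _
  have hgYf : ∀ (p : ℕ) (n : ℕ), expand p (gY n) = gY n ^ p := fun p n => expand_X p _
  have hw : ∀ m ∈ S, ∀ p : ℕ, p.Prime → p ∣ m →
      (p : B) ^ m.factorization p ∣ (psi S gX m + psi S gY m)
        - expand p (psi S gX (m / p) + psi S gY (m / p)) := by
    intro m hm p hpp hpm
    have h1 := gc_psi hS gX hgXf hm hpp hpm
    have h2 := gc_psi hS gY hgYf hm hpp hpm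
    have he : (psi S gX m + psi S gY m) - expand p (psi S gX (m / p) + psi S gY (m / p))
        = (psi S gX m - expand p (psi S gX (m / p)))
          + (psi S gY m - expand p (psi S gY (m / p))) := by
      rw [map_add]; ring
    rw [he]
    exact dvd_add h1 h2
  obtain ⟨Z, hZ⟩ := core_exists hS _ hw
  set φ : B →+* A := (MvPolynomial.eval₂Hom (Int.castRingHom A)
    (fun v => if v.2 then y v.1 else x v.1))
  refine ⟨fun n => φ (Z n), ?_⟩
  intro m hm
  have h1 : psi S (fun n => φ (Z n)) m = φ (psi S Z m) := (map_psi φ Z m).symm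
  rw [h1, hZ m hm, map_add, map_psi φ gX m, map_psi φ gY m]
  have ex : (fun n => φ (gX n)) = x := by funext n; rw [hgX]; exact MvPolynomial.eval₂Hom_X' _ _ _
  have ey : (fun n => φ (gY n)) = y := by funext n; rw [hgY]; exact MvPolynomial.eval₂Hom_X' _ _ _
  rw [ex, ey]

lemma psi_neg {A : Type*} [CommRing A] {S : Set ℕ} (hS : IsTruncationSet S) (x : ℕ → A) :
    ∃ z : ℕ → A, ∀ m ∈ S, psi S z m = - psi S x m := by
  classical
  set B := MvPolynomial (ℕ × Bool) ℤ with hB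
  set gX : ℕ → B := fun n => X (n, false) with hgX
  have hgXf : ∀ (p : ℕ) (n : ℕ), expand p (gX n) = gX n ^ p := fun p n => expand_X p _
  have hw : ∀ m ∈ S, ∀ p : ℕ, p.Prime → p ∣ m →
      (p : B) ^ m.factorization p ∣ (- psi S gX m) - expand p (- psi S gX (m / p)) := by
    intro m hm p hpp hpm
    have h1 := gc_psi hS gX hgXf hm hpp hpm
    have he : (- psi S gX m) - expand p (- psi S gX (m / p))
        = - (psi S gX m - expand p (psi S gX (m / p))) := by
      rw [map_neg]; ring
    rw [he]
    exact h1.neg_right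
  obtain ⟨Z, hZ⟩ := core_exists hS _ hw
  set φ : B →+* A := (MvPolynomial.eval₂Hom (Int.castRingHom A) (fun v => x v.1))
  refine ⟨fun n => φ (Z n), ?_⟩
  intro m hm
  have h1 : psi S (fun n => φ (Z n)) m = φ (psi S Z m) := (map_psi φ Z m).symm
  rw [h1, hZ m hm, map_neg, map_psi φ gX m]
  have ex : (fun n => φ (gX n)) = x := by funext n; rw [hgX]; exact MvPolynomial.eval₂Hom_X' _ _ _
  rw [ex]

open Classical in
noncomputable def xext (S : Set ℕ) {A : Type*} [CommRing A] (a : ↥S → A) (n : ℕ) : A :=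
  if h : n ∈ S then a ⟨n, h⟩ else 0

lemma xext_mem {S : Set ℕ} {A : Type*} [CommRing A] (a : ↥S → A) {n : ℕ} (h : n ∈ S) :
    xext S a n = a ⟨n, h⟩ := dif_pos h

lemma PsiS_apply {A : Type*} [CommRing A] (S : Set ℕ) (a : ↥S → A) (m : ↥S) :
    PsiS S a m = psi S (xext S a) m.1 := by
  classical
  rw [PsiS, psi]
  rw [← Finset.sum_attach (dS S m.1) (fun n => (n : A) * xext S a n ^ (m.1 / n))]
  apply Finset.sum_congr rfl
  intro n _
  rw [xext_mem a (Finset.mem_filter.mp n.2).2]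

lemma versch_apply {A : Type*} [CommRing A] (S : Set ℕ) (n : ℕ) (c : A) (μ : ↥S) :
    Versch S n (fun ν => c ^ ν.1) μ = if n ∣ μ.1 then (n : A) * c ^ (μ.1 / n) else 0 := by
  rw [Versch]
  split <;> rfl

lemma psi_pos_pow {S : Set ℕ} (hS : IsTruncationSet S) {m n : ℕ} (hn : n ∈ dS S m) :
    m / n ≠ 0 := by
  obtain ⟨h1, h2, h3⟩ := mem_dS.mp hn
  exact (Nat.div_pos (Nat.le_of_dvd (Nat.pos_of_ne_zero h2) h1) (hS.2.1 n h3)).ne'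

lemma PsiS_single {A : Type*} [CommRing A] {S : Set ℕ} (hS : IsTruncationSet S)
    {n : ℕ} (hn : n ∈ S) (c : A) :
    PsiS S (fun s => if s.1 = n then c else 0) = Versch S n (fun ν => c ^ ν.1) := by
  classical
  funext μ
  rw [PsiS_apply, versch_apply]
  have hx : psi S (xext S (fun s => if s.1 = n then c else 0)) μ.1
      = psi S (fun k => if k = n then c else 0) μ.1 := by
    apply psi_congr
    intro k hk
    rw [xext_mem _ hk]
  rw [hx]
  by_cases hd : n ∣ μ.1
  · rw [if_pos hd]
    have hmem : n ∈ dS S μ.1 := mem_dS.mpr ⟨hd, (hS.2.1 μ.1 μ.2).ne', hn⟩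
    rw [psi, Finset.sum_eq_single_of_mem n hmem ?_]
    · rw [if_pos rfl]
    · intro k hk hkn
      rw [if_neg hkn, zero_pow (psi_pos_pow hS hk), mul_zero]
  · rw [if_neg hd, psi]
    apply Finset.sum_eq_zero
    intro k hk
    have hkn : k ≠ n := fun h => hd (h ▸ (mem_dS.mp hk).1)
    rw [if_neg hkn, zero_pow (psi_pos_pow hS hk), mul_zero]

lemma psi_zero_fun {A : Type*} [CommRing A] {S : Set ℕ} (hS : IsTruncationSet S) (m : ℕ) :
    psi S (fun _ => (0 : A)) m = 0 := by
  apply Finset.sum_eq_zero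
  intro k hk
  rw [zero_pow (psi_pos_pow hS hk), mul_zero]

lemma mem_closure_pi' {ι A : Type*} [TopologicalSpace A] [DiscreteTopology A]
    {T : Set (ι → A)} {y : ι → A} :
    y ∈ closure T ↔ ∀ F : Finset ι, ∃ t ∈ T, ∀ i ∈ F, t i = y i := by
  constructor
  · intro hy F
    have hO : IsOpen (Set.pi (↑F) (fun i => ({y i} : Set A))) :=
      isOpen_set_pi F.finite_toSet (fun a _ => isOpen_discrete _)
    have hyO : y ∈ Set.pi (↑F) (fun i => ({y i} : Set A)) := fun i _ => rfl
    obtain ⟨t, htO, htT⟩ := _root_.mem_closure_iff.mp hy _ hO hyO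
    exact ⟨t, htT, fun i hi => htO i hi⟩
  · intro h
    rw [_root_.mem_closure_iff]
    intro O hO hyO
    obtain ⟨I, u, hu, hsub⟩ := isOpen_pi_iff.mp hO y hyO
    obtain ⟨t, htT, hti⟩ := h I
    exact ⟨t, hsub (fun i hi => (hti i hi) ▸ (hu i hi).2), htT⟩


/-- For a commutative ring `A` without `S`-torsion, `Ψ_S : A^S → A^S` is
injective with image exactly `X_S(A)`, and the resulting bijection
`A^S → X_S(A)` is a homeomorphism (`A` discrete, product topologies). -/
theorem statement5 {A : Type*} [CommRing A] (S : Set ℕ)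
    (hS : IsTruncationSet S)
    (htf : ∀ n ∈ S, Function.Injective fun x : A => (n : A) * x) :
    Function.Injective (PsiS S (A := A)) ∧
    Set.range (PsiS S (A := A)) = XS S (Set.univ : Set A) ∧
    ∃ e : (↥S → A) ≃ ↥(XS S (Set.univ : Set A)),
      (∀ a : ↥S → A, (e a).1 = PsiS S a) ∧
      @Continuous _ _ (prodTop S A)
        (TopologicalSpace.induced Subtype.val (prodTop S A)) e ∧
      @Continuous _ _ (TopologicalSpace.induced Subtype.val (prodTop S A))
        (prodTop S A) e.symm := by
  classical
  letI : TopologicalSpace A := ⊥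
  haveI : DiscreteTopology A := ⟨rfl⟩
  -- injectivity
  have hinj : Function.Injective (PsiS S (A := A)) := by
    intro a b hab
    funext μ
    have h1 : ∀ d ∈ S, d ∣ μ.1 → psi S (xext S a) d = psi S (xext S b) d := by
      intro d hdS _
      have h2 := congrFun hab ⟨d, hdS⟩
      rwa [PsiS_apply, PsiS_apply] at h2
    have h3 := psi_uniq hS htf h1 μ.1 μ.2 dvd_rfl
    rwa [xext_mem a μ.2, xext_mem b μ.2] at h3
  set gens : Set (↥S → A) :=
    {x | ∃ n ∈ S, ∃ a ∈ (Set.univ : Set A), x = Versch S n fun ν => a ^ ν.1} with hgens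
  have hXS : XS S (Set.univ : Set A)
      = closure (↑(AddSubgroup.closure gens) : Set (↥S → A)) := rfl
  -- range ⊆ XS
  have hsub1 : Set.range (PsiS S (A := A)) ⊆ XS S (Set.univ : Set A) := by
    rintro _ ⟨a, rfl⟩
    rw [hXS, mem_closure_pi']
    intro F
    set D : Finset ℕ := F.biUnion (fun μ => dS S μ.1) with hD
    have hDS : ∀ n ∈ D, n ∈ S := by
      intro n hn
      obtain ⟨μ, _, hn2⟩ := Finset.mem_biUnion.mp hn
      exact (mem_dS.mp hn2).2.2
    refine ⟨∑ n ∈ D.attach, Versch S n.1 (fun ν => (xext S a n.1) ^ ν.1), ?_, ?_⟩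
    · exact SetLike.mem_coe.mpr (AddSubgroup.sum_mem _ (fun n _ =>
        AddSubgroup.subset_closure ⟨n.1, hDS n.1 n.2, xext S a n.1, trivial, rfl⟩))
    · intro μ hμ
      rw [Finset.sum_apply]
      have h1 : ∀ n ∈ D.attach, Versch S n.1 (fun ν => (xext S a n.1) ^ ν.1) μ
          = if n.1 ∣ μ.1 then (n.1 : A) * (xext S a n.1) ^ (μ.1 / n.1) else 0 :=
        fun n _ => versch_apply S n.1 _ μ
      rw [Finset.sum_congr rfl h1, Finset.sum_attach D
        (fun n => if n ∣ μ.1 then (n : A) * (xext S a n) ^ (μ.1 / n) else 0),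
        ← Finset.sum_filter]
      have hDf : D.filter (· ∣ μ.1) = dS S μ.1 := by
        apply Finset.ext
        intro n
        constructor
        · intro hn
          obtain ⟨hn1, hn2⟩ := Finset.mem_filter.mp hn
          exact mem_dS.mpr ⟨hn2, (hS.2.1 μ.1 μ.2).ne', hDS n hn1⟩
        · intro hn
          exact Finset.mem_filter.mpr ⟨Finset.mem_biUnion.mpr ⟨μ, hμ, hn⟩, (mem_dS.mp hn).1⟩
      rw [hDf, PsiS_apply]
      rfl
  -- subgroup ⊆ range
  have hGsub : (↑(AddSubgroup.closure gens) : Set (↥S → A)) ⊆ Set.range (PsiS S (A := A)) := by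
    intro t ht
    rw [SetLike.mem_coe] at ht
    induction ht using AddSubgroup.closure_induction with
    | mem x hx =>
        obtain ⟨n, hnS, c, -, rfl⟩ := hx
        exact ⟨fun s => if s.1 = n then c else 0, PsiS_single hS hnS c⟩
    | zero =>
        refine ⟨0, ?_⟩
        funext μ
        rw [PsiS_apply]
        have h1 : psi S (xext S (0 : ↥S → A)) μ.1 = psi S (fun _ => (0 : A)) μ.1 :=
          psi_congr (fun n hn => by rw [xext_mem _ hn]; rfl) μ.1
        rw [h1, psi_zero_fun hS]
        rfl
    | add x y hx hy ihx ihy =>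
        obtain ⟨a, rfl⟩ := ihx
        obtain ⟨b, rfl⟩ := ihy
        obtain ⟨z, hz⟩ := psi_add hS (xext S a) (xext S b)
        refine ⟨fun s => z s.1, ?_⟩
        funext μ
        rw [PsiS_apply]
        have h1 : psi S (xext S (fun s => z s.1)) μ.1 = psi S z μ.1 :=
          psi_congr (fun n hn => xext_mem _ hn) μ.1
        rw [h1, hz μ.1 μ.2, Pi.add_apply, PsiS_apply, PsiS_apply]
    | neg x hx ihx =>
        obtain ⟨a, rfl⟩ := ihx
        obtain ⟨z, hz⟩ := psi_neg hS (xext S a)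
        refine ⟨fun s => z s.1, ?_⟩
        funext μ
        rw [PsiS_apply]
        have h1 : psi S (xext S (fun s => z s.1)) μ.1 = psi S z μ.1 :=
          psi_congr (fun n hn => xext_mem _ hn) μ.1
        rw [h1, hz μ.1 μ.2, Pi.neg_apply, PsiS_apply]
  -- closure of range ⊆ range
  have hclosed : ∀ y : ↥S → A, y ∈ closure (Set.range (PsiS S (A := A))) →
      y ∈ Set.range (PsiS S (A := A)) := by
    intro y hy
    rw [mem_closure_pi'] at hy
    have happ : ∀ m, m ∈ S → ∃ a : ↥S → A,
        ∀ d ∈ S, d ∣ m → psi S (xext S a) d = xext S y d := by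
      intro m hm
      set F : Finset ↥S := (dS S m).attach.image
        (fun n => (⟨n.1, (mem_dS.mp n.2).2.2⟩ : ↥S)) with hF
      obtain ⟨t, ht, hta⟩ := hy F
      obtain ⟨a, rfl⟩ := ht
      refine ⟨a, ?_⟩
      intro d hd hdm
      have hdd : d ∈ dS S m := mem_dS.mpr ⟨hdm, (hS.2.1 m hm).ne', hd⟩
      have hdF : (⟨d, hd⟩ : ↥S) ∈ F :=
        Finset.mem_image.mpr ⟨⟨d, hdd⟩, Finset.mem_attach _ _, rfl⟩
      have h2 := hta _ hdF
      rw [PsiS_apply] at h2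
      rw [xext_mem y hd]
      exact h2
    choose Z hZ using happ
    have hglue := psi_glue hS htf (xext S y) (· ∈ S) (fun n h => h)
      (fun n d _ _ hdS => hdS) (fun n h => xext S (Z n h)) hZ
    refine ⟨fun s => if h : s.1 ∈ S then xext S (Z s.1 h) s.1 else 0, ?_⟩
    funext μ
    rw [PsiS_apply]
    have h1 : psi S (xext S (fun s : ↥S =>
          if h : s.1 ∈ S then xext S (Z s.1 h) s.1 else 0)) μ.1
        = psi S (fun n => if h : n ∈ S then xext S (Z n h) n else 0) μ.1 := by
      apply psi_congr
      intro n hn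
      rw [xext_mem _ hn]
    rw [h1, hglue μ.1 μ.2, xext_mem y μ.2, Subtype.coe_eta]
  have hrange : Set.range (PsiS S (A := A)) = XS S (Set.univ : Set A) := by
    apply subset_antisymm hsub1
    intro y hy
    have hy' : y ∈ closure (↑(AddSubgroup.closure gens) : Set (↥S → A)) := hy
    exact hclosed y (closure_mono hGsub hy')
  have hmem : ∀ a : ↥S → A, PsiS S a ∈ XS S (Set.univ : Set A) := by
    intro a; rw [← hrange]; exact Set.mem_range_self a
  set f : (↥S → A) → ↥(XS S (Set.univ : Set A)) := fun a => ⟨PsiS S a, hmem a⟩ with hf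
  have hbij : Function.Bijective f := by
    constructor
    · intro a b hab
      exact hinj (congrArg Subtype.val hab)
    · intro y
      have h2 : y.1 ∈ Set.range (PsiS S (A := A)) := by rw [hrange]; exact y.2
      obtain ⟨a, ha⟩ := h2
      exact ⟨a, Subtype.ext ha⟩
  have hcont1 : Continuous (PsiS S (A := A)) := by
    apply continuous_pi
    intro μ
    have hfac : (fun a : ↥S → A => PsiS S a μ)
        = (fun t : {n // n ∈ dS S μ.1} → A =>
            ∑ n ∈ (dS S μ.1).attach, (n.1 : A) * (t n) ^ (μ.1 / n.1))
          ∘ (fun (a : ↥S → A) (n : {n // n ∈ dS S μ.1}) =>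
              a ⟨n.1, (mem_dS.mp n.2).2.2⟩) := rfl
    rw [hfac]
    exact continuous_of_discreteTopology.comp (continuous_pi fun n => continuous_apply _)
  have hcont2 : Continuous ((Equiv.ofBijective f hbij).symm :
      ↥(XS S (Set.univ : Set A)) → (↥S → A)) := by
    apply continuous_pi
    intro μ
    set r : ↥(XS S (Set.univ : Set A)) → ({n // n ∈ dS S μ.1} → A) :=
      fun y n => y.1 ⟨n.1, (mem_dS.mp n.2).2.2⟩ with hrdef
    have hrc : Continuous r :=
      continuous_pi fun n => (continuous_apply _).comp continuous_subtype_val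
    set h : ({n // n ∈ dS S μ.1} → A) → A := fun t =>
      if hex : ∃ a : ↥S → A,
          ∀ n : {n // n ∈ dS S μ.1}, PsiS S a ⟨n.1, (mem_dS.mp n.2).2.2⟩ = t n
      then hex.choose μ else 0 with hhdef
    have hkey : (fun y : ↥(XS S (Set.univ : Set A)) =>
        (Equiv.ofBijective f hbij).symm y μ) = h ∘ r := by
      funext y
      set a0 := (Equiv.ofBijective f hbij).symm y with ha0def
      have ha0 : PsiS S a0 = y.1 := by
        have h3 := (Equiv.ofBijective f hbij).apply_symm_apply y
        exact congrArg Subtype.val h3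
      have hex : ∃ a : ↥S → A,
          ∀ n : {n // n ∈ dS S μ.1}, PsiS S a ⟨n.1, (mem_dS.mp n.2).2.2⟩ = r y n :=
        ⟨a0, fun n => by rw [ha0]⟩
      simp only [Function.comp_apply, hhdef]
      rw [dif_pos hex]
      have hspec := hex.choose_spec
      have huniq : ∀ d ∈ S, d ∣ μ.1 →
          psi S (xext S hex.choose) d = psi S (xext S a0) d := by
        intro d hd hdm
        have hdd : d ∈ dS S μ.1 := mem_dS.mpr ⟨hdm, (hS.2.1 μ.1 μ.2).ne', hd⟩
        have h2 := hspec ⟨d, hdd⟩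
        rw [PsiS_apply] at h2
        calc psi S (xext S hex.choose) d = y.1 ⟨d, hd⟩ := h2
          _ = PsiS S a0 ⟨d, hd⟩ := by rw [ha0]
          _ = psi S (xext S a0) d := PsiS_apply S a0 ⟨d, hd⟩
      have h4 := psi_uniq hS htf huniq μ.1 μ.2 dvd_rfl
      rw [xext_mem _ μ.2, xext_mem _ μ.2] at h4
      exact h4.symm
    rw [hkey]
    exact continuous_of_discreteTopology.comp hrc
  refine ⟨hinj, hrange, Equiv.ofBijective f hbij, fun a => rfl, ?_, ?_⟩
  · exact continuous_induced_rng.mpr hcont1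
  · exact hcont2
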